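/- arXiv:0902.1267 — 5 statements merged into one kernel-verified Lean document; each statement's English description precedes it below -/
import Mathlib

section
/- If p ≡ 1 (mod 4), then T_w is conjugate in SL_2(F_p) to the standard diagonal torus A: there exists s ∈ SL_2(F_p) such that T_w = { s·d·s⁻¹ : d ∈ A }. -/
open Matrix

/-- If p ≡ 1 (mod 4), then T_w is conjugate in SL_2(F_p) to the standard
diagonal torus A: there is s ∈ SL_2(F_p) with T_w = { s·d·s⁻¹ : d ∈ A }. -/
theorem Tw_conjugate_to_diagonal_torus (p : ℕ) [Fact p.Prime] (hodd : Odd p)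
    (hp4 : p % 4 = 1) :
    ∃ s : Matrix.SpecialLinearGroup (Fin 2) (ZMod p),
      {g : Matrix.SpecialLinearGroup (Fin 2) (ZMod p) |
        ∃ a b : ZMod p, a ^ 2 + b ^ 2 = 1 ∧
          (g : Matrix (Fin 2) (Fin 2) (ZMod p)) = !![a, -b; b, a]} =
      (fun d => s * d * s⁻¹) ''
        {d : Matrix.SpecialLinearGroup (Fin 2) (ZMod p) |
          ∃ a : ZMod p, a ≠ 0 ∧
            (d : Matrix (Fin 2) (Fin 2) (ZMod p)) = !![a, 0; 0, a⁻¹]} := by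
  have hp : p.Prime := Fact.out
  have h2 : (2 : ZMod p) ≠ 0 := by
    have : ((2 : ℕ) : ZMod p) ≠ 0 := by
      rw [Ne, ZMod.natCast_eq_zero_iff]
      intro hdvd
      have := (Nat.prime_dvd_prime_iff_eq hp Nat.prime_two).mp hdvd
      omega
    simpa using this
  obtain ⟨u, hu⟩ : IsSquare (-1 : ZMod p) := by
    rw [ZMod.exists_sq_eq_neg_one_iff]; omega
  have hu' : u * u = -1 := hu.symm
  obtain ⟨s, hs⟩ : ∃ s : Matrix.SpecialLinearGroup (Fin 2) (ZMod p),
      (s : Matrix (Fin 2) (Fin 2) (ZMod p)) = !![u / 2, 1; -(1/2), -u] := ⟨⟨!![u / 2, 1; -(1/2), -u], by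
    rw [Matrix.det_fin_two_of]; linear_combination (-1/2 : ZMod p) * hu' + mul_inv_cancel₀ h2⟩, rfl⟩
  refine ⟨s, ?_⟩
  ext g
  simp only [Set.mem_setOf_eq, Set.mem_image]
  constructor
  · rintro ⟨a, b, hab, hg⟩
    set c : ZMod p := a - u * b with hc
    have hmul : c * (a + u * b) = 1 := by
      rw [hc]; linear_combination hab - b ^ 2 * hu'
    have hcne : c ≠ 0 := left_ne_zero_of_mul_eq_one hmul
    have hcinv : c⁻¹ = a + u * b := inv_eq_of_mul_eq_one_right hmul
    obtain ⟨d, hd⟩ : ∃ d : Matrix.SpecialLinearGroup (Fin 2) (ZMod p),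
        (d : Matrix (Fin 2) (Fin 2) (ZMod p)) = !![c, 0; 0, a + u * b] := ⟨⟨!![c, 0; 0, a + u * b], by
      rw [Matrix.det_fin_two_of]; linear_combination hmul⟩, rfl⟩
    refine ⟨d, ⟨c, hcne, by
        simp [hd, hcinv]⟩, ?_⟩
    apply Subtype.ext
    simp only [Matrix.SpecialLinearGroup.coe_mul, Matrix.SpecialLinearGroup.coe_inv]
    rw [hg, hs, hd]
    simp only [Matrix.adjugate_fin_two_of]
    ext i j
    fin_cases i <;> fin_cases j <;>
      (simp [Matrix.mul_apply, Fin.sum_univ_two, hc]; field_simp;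
        first
          | linear_combination (2 * u * b - 2 * a) * hu'
          | linear_combination (4 * b) * hu'
          | linear_combination (-2 * b) * hu'
          | linear_combination (-(a + u * b)) * hu'
          | linear_combination (u * b - a) * hu'
          | linear_combination (2 * b) * hu'
          | ring)
  · rintro ⟨d, ⟨a, ha, hd⟩, hg⟩
    refine ⟨(a + a⁻¹) / 2, u * (a - a⁻¹) / 2, ?_, ?_⟩
    · field_simp
      linear_combination ((a ^ 2 - 1) ^ 2) * hu'
    · rw [← hg]
      simp only [Matrix.SpecialLinearGroup.coe_mul, Matrix.SpecialLinearGroup.coe_inv]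
      rw [hd, hs]
      simp only [Matrix.adjugate_fin_two_of]
      ext i j
      fin_cases i <;> fin_cases j <;>
        (simp [Matrix.mul_apply, Fin.sum_univ_two]; field_simp;
          first
            | linear_combination (-(4 * a ^ 3)) * hu'
            | linear_combination (-(4 * a)) * hu'
            | linear_combination (-(a ^ 2)) * hu'
            | linear_combination (-1 : ZMod p) * hu'
            | ring)
end

section
/- The matrix s = [[1, 2⁻¹a^k],[a^k, 2⁻¹]] has determinant 1 (so s ∈ SL_2(F_p)), and the element t = s·[[a,0],[0,a⁻¹]]·s⁻¹ belongs to T_w. -/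
open Matrix

/-- The matrix s = [[1, 2⁻¹a^k],[a^k, 2⁻¹]] has determinant 1, and
t = s·[[a,0],[0,a⁻¹]]·s⁻¹ belongs to T_w. -/
theorem s_det_one_and_t_mem_Tw (p : ℕ) [Fact p.Prime] (hp4 : p % 4 = 1)
    (a : ZMod p) (ha : orderOf a = p - 1)
    (k : ℕ) (hk : k = (p - 1) / 4)
    (s g : Matrix (Fin 2) (Fin 2) (ZMod p))
    (hs : s = !![1, 2⁻¹ * a ^ k; a ^ k, 2⁻¹])
    (hg : g = !![a, 0; 0, a⁻¹]) :
    s.det = 1 ∧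
    ∃ b c : ZMod p, b ^ 2 + c ^ 2 = 1 ∧ s * g * s⁻¹ = !![b, -c; c, b] := by
  have hp := (Fact.out : p.Prime)
  have hp5 : 5 ≤ p := by have := hp.two_le; omega
  have h1 : a ^ (p - 1) = 1 := by rw [← ha]; exact pow_orderOf_eq_one a
  have ha0 : a ≠ 0 := by
    rintro rfl
    rw [zero_pow (by omega)] at h1
    exact zero_ne_one h1
  have h2 : (2 : ZMod p) ≠ 0 := by
    have : ((2 : ℕ) : ZMod p) ≠ 0 := by
      rw [Ne, ZMod.natCast_eq_zero_iff]
      intro h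
      have := Nat.le_of_dvd (by norm_num) h
      omega
    simpa using this
  have hsq : a ^ (k + k) * a ^ (k + k) = 1 := by
    rw [← pow_add]
    rw [show k + k + (k + k) = p - 1 by omega]
    exact h1
  have hne : a ^ (k + k) ≠ 1 := by
    intro h
    have := Nat.le_of_dvd (by omega) (ha ▸ orderOf_dvd_of_pow_eq_one h)
    omega
  have h2k : a ^ k * a ^ k = -1 := by
    rw [← pow_add]
    rcases mul_self_eq_one_iff.mp hsq with h | h
    · exact absurd h hne
    · exact h
  have h2k' : a ^ (k * 2) = -1 := by
    rw [pow_mul, sq]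
    exact h2k
  have hdet : s.det = 1 := by
    rw [hs, Matrix.det_fin_two_of]
    field_simp
    linear_combination -h2k
  refine ⟨hdet, 2⁻¹ * (a + a⁻¹), 2⁻¹ * a ^ k * (a - a⁻¹), ?_, ?_⟩
  · field_simp
    ring_nf
    linear_combination (a^2 - 1)^2 * h2k
  · have hsinv : s⁻¹ = !![2⁻¹, -(2⁻¹ * a ^ k); -(a ^ k), 1] := by
      rw [Matrix.inv_def, hdet, hs, Matrix.adjugate_fin_two_of]
      simp
    rw [hsinv, hs, hg]
    ext i j
    fin_cases i <;> fin_cases j <;>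
      simp [Matrix.mul_apply, Fin.sum_univ_succ] <;> field_simp <;> ring_nf <;>
      simp only [h2k'] <;> ring_nf
end

section
/- The element t = s·[[a,0],[0,a⁻¹]]·s⁻¹, where s = [[1, 2⁻¹a^k],[a^k, 2⁻¹]], has order p−1 and generates the group T_w: the cyclic subgroup generated by t equals T_w. -/
open Matrix

/-- t = s·[[a,0],[0,a⁻¹]]·s⁻¹ with s = [[1, 2⁻¹a^k],[a^k, 2⁻¹]] has
order p−1 and generates T_w. -/
theorem t_generates_Tw (p : ℕ) [Fact p.Prime] (hp4 : p % 4 = 1)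
    (a : ZMod p) (ha : orderOf a = p - 1)
    (k : ℕ) (hk : k = (p - 1) / 4)
    (T : Subgroup (Matrix.SpecialLinearGroup (Fin 2) (ZMod p)))
    (hT : ∀ g : Matrix.SpecialLinearGroup (Fin 2) (ZMod p),
      g ∈ T ↔ ∃ x y : ZMod p, x ^ 2 + y ^ 2 = 1 ∧
        (g : Matrix (Fin 2) (Fin 2) (ZMod p)) = !![x, -y; y, x])
    (s g t : Matrix.SpecialLinearGroup (Fin 2) (ZMod p))
    (hs : (s : Matrix (Fin 2) (Fin 2) (ZMod p)) = !![1, 2⁻¹ * a ^ k; a ^ k, 2⁻¹])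
    (hg : (g : Matrix (Fin 2) (Fin 2) (ZMod p)) = !![a, 0; 0, a⁻¹])
    (ht : t = s * g * s⁻¹) :
    orderOf t = p - 1 ∧ Subgroup.zpowers t = T := by
  have hprime : p.Prime := Fact.out
  have hp5 : 5 ≤ p := by have := hprime.two_le; omega
  have h4k : 4 * k = p - 1 := by omega
  have hk1 : 1 ≤ k := by omega
  -- a ≠ 0
  have ha0 : a ≠ 0 := by
    intro h
    have h1 := pow_orderOf_eq_one a
    rw [ha, h] at h1
    rw [zero_pow (by omega : p - 1 ≠ 0)] at h1
    exact zero_ne_one h1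
  have hainv : a * a⁻¹ = 1 := mul_inv_cancel₀ ha0
  have h2 : (2 : ZMod p) ≠ 0 := by
    have h2' : ((2 : ℕ) : ZMod p) ≠ 0 := by
      rw [Ne, ZMod.natCast_eq_zero_iff]
      intro h; exact absurd (Nat.le_of_dvd two_pos h) (by omega)
    simpa using h2'
  have hc : (2 : ZMod p) * 2⁻¹ = 1 := mul_inv_cancel₀ h2
  -- i² = −1
  have hi : a ^ k * a ^ k = -1 := by
    have hsq : a ^ (2 * k) * a ^ (2 * k) = 1 := by
      rw [← pow_add]
      have h' : 2 * k + 2 * k = p - 1 := by omega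
      rw [h', ← ha, pow_orderOf_eq_one]
    have hne : a ^ (2 * k) ≠ 1 := by
      intro h
      have hd := orderOf_dvd_of_pow_eq_one h
      rw [ha] at hd
      have := Nat.le_of_dvd (by omega) hd
      omega
    rcases mul_self_eq_one_iff.mp hsq with h | h
    · exact absurd h hne
    · rw [← pow_add]
      have h' : k + k = 2 * k := by ring
      rw [h', h]
  -- coe of s⁻¹
  have hsinv : ((s⁻¹ : Matrix.SpecialLinearGroup (Fin 2) (ZMod p)) :
      Matrix (Fin 2) (Fin 2) (ZMod p)) = !![2⁻¹, -(2⁻¹ * a ^ k); -(a ^ k), 1] := by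
    rw [Matrix.SpecialLinearGroup.coe_inv, hs, Matrix.adjugate_fin_two]
    simp
  -- the key product computation
  have hprod : ∀ u v : ZMod p,
      (!![1, 2⁻¹ * a ^ k; a ^ k, 2⁻¹] : Matrix (Fin 2) (Fin 2) (ZMod p)) * !![u, 0; 0, v] *
        !![2⁻¹, -(2⁻¹ * a ^ k); -(a ^ k), 1]
      = !![(u + v) * 2⁻¹, -(a ^ k * (u - v) * 2⁻¹); a ^ k * (u - v) * 2⁻¹, (u + v) * 2⁻¹] := by
    intro u v
    rw [Matrix.mul_fin_two, Matrix.mul_fin_two]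
    ext i' j'
    fin_cases i' <;> fin_cases j' <;> simp <;>
      first
        | ring1
        | linear_combination (-(2⁻¹ * v)) * hi
        | linear_combination (-(2⁻¹ * u)) * hi
  -- coe of g^m
  have hgn : ∀ m : ℕ, ((g ^ m : Matrix.SpecialLinearGroup (Fin 2) (ZMod p)) :
      Matrix (Fin 2) (Fin 2) (ZMod p)) = !![a ^ m, 0; 0, (a ^ m)⁻¹] := by
    intro m
    rw [Matrix.SpecialLinearGroup.coe_pow, hg, ← inv_pow]
    induction m with
    | zero => simp [Matrix.one_fin_two]
    | succ n ih => rw [pow_succ, ih, Matrix.mul_fin_two]; simp [pow_succ]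
  -- coe of t^m
  have htm : ∀ m : ℕ, ((t ^ m : Matrix.SpecialLinearGroup (Fin 2) (ZMod p)) :
      Matrix (Fin 2) (Fin 2) (ZMod p)) =
      !![(a ^ m + (a ^ m)⁻¹) * 2⁻¹, -(a ^ k * (a ^ m - (a ^ m)⁻¹) * 2⁻¹);
         a ^ k * (a ^ m - (a ^ m)⁻¹) * 2⁻¹, (a ^ m + (a ^ m)⁻¹) * 2⁻¹] := by
    intro m
    have h1 : t ^ m = s * g ^ m * s⁻¹ := by rw [ht, conj_pow]
    rw [h1, Matrix.SpecialLinearGroup.coe_mul, Matrix.SpecialLinearGroup.coe_mul,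
      hs, hgn m, hsinv, hprod]
  -- order of t
  have hordg : orderOf g = p - 1 := by
    rw [← ha]
    apply orderOf_eq_orderOf_iff.mpr
    intro n
    constructor
    · intro h
      have h' := Subtype.ext_iff.mp h
      rw [hgn n, Matrix.SpecialLinearGroup.coe_one] at h'
      have := congrFun (congrFun h' 0) 0
      simpa [Matrix.one_apply] using this
    · intro h
      apply Subtype.ext
      rw [hgn n, Matrix.SpecialLinearGroup.coe_one, Matrix.one_fin_two, h, inv_one]
  have hsc : SemiconjBy s g t := by
    show s * g = t * s
    rw [ht]
    group
  have hordt : orderOf t = p - 1 := by rw [← SemiconjBy.orderOf_eq s hsc, hordg]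
  refine ⟨hordt, le_antisymm ?_ ?_⟩
  · -- zpowers t ≤ T : t ∈ T
    rw [Subgroup.zpowers_le]
    rw [hT]
    refine ⟨(a + a⁻¹) * 2⁻¹, a ^ k * (a - a⁻¹) * 2⁻¹, ?_, ?_⟩
    · linear_combination (2⁻¹ ^ 2 * (a - a⁻¹) ^ 2) * hi +
        (a * a⁻¹ * (2 * 2⁻¹ + 1)) * hc + hainv
    · have := htm 1
      simpa [pow_one] using this
  · -- T ≤ zpowers t
    intro g' hg'
    obtain ⟨x, y, hxy, hmat⟩ := (hT g').mp hg'
    set u : ZMod p := x - a ^ k * y with hudef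
    set v : ZMod p := x + a ^ k * y with hvdef
    have huv : u * v = 1 := by
      rw [hudef, hvdef]
      linear_combination hxy - y ^ 2 * hi
    have hu0 : u ≠ 0 := left_ne_zero_of_mul_eq_one huv
    have hvinv : u⁻¹ = v := inv_eq_of_mul_eq_one_right huv
    -- find m with a^m = u
    have hex : ∃ m : ℕ, a ^ m = u := by
      have hcard : Nat.card (ZMod p)ˣ = p - 1 := by
        rw [Nat.card_eq_fintype_card, ZMod.card_units]
      have hoau : orderOf (Units.mk0 a ha0) = p - 1 := by
        rw [← orderOf_units]; simpa using ha
      have htop : Subgroup.zpowers (Units.mk0 a ha0) = ⊤ :=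
        Subgroup.eq_top_of_card_eq _ (by rw [Nat.card_zpowers, hoau, hcard])
      have hmem : Units.mk0 u hu0 ∈ Subgroup.zpowers (Units.mk0 a ha0) := by
        rw [htop]; exact Subgroup.mem_top _
      rw [← mem_powers_iff_mem_zpowers] at hmem
      obtain ⟨m, hm⟩ := hmem
      refine ⟨m, ?_⟩
      have := congrArg (Units.val) hm
      simpa using this
    obtain ⟨m, hm⟩ := hex
    have hgt : g' = t ^ m := by
      apply Subtype.ext
      rw [hmat, htm m, hm, hvinv]
      ext i' j'
      fin_cases i' <;> fin_cases j' <;> simp [hudef, hvdef] <;>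
        first
          | linear_combination x * hc
          | linear_combination (-x) * hc
          | linear_combination (-(2 * y * 2⁻¹)) * hi + y * hc
          | linear_combination (2 * y * 2⁻¹) * hi - y * hc
    rw [hgt]
    exact Subgroup.pow_mem _ (Subgroup.mem_zpowers t) m
end

section
/- The family Φ_p = {φ_x : 0 ≤ x ≤ p−1} is an orthonormal basis of the p-dimensional complex Hilbert space ℂ(F_p), and every φ_x is an eigenvector of the discrete Fourier transform F. -/
open Finset
open Finset
namespace PhiAux
open Finset


lemma pow_eq_of_modEq {θ : ℂ} {N m n : ℕ} (h1 : θ ^ N = 1) (h : m ≡ n [MOD N]) :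
    θ ^ m = θ ^ n := by
  rw [pow_eq_pow_mod m h1, pow_eq_pow_mod n h1, h]

variable {p : ℕ} [hp : Fact p.Prime] {η : ℂ}

lemma e_add (h1 : η ^ p = 1) (z w : ZMod p) :
    η ^ (z + w).val = η ^ z.val * η ^ w.val := by
  rw [ZMod.val_add, ← pow_eq_pow_mod _ h1, pow_add]

lemma e_ne_zero (h1 : η ^ p = 1) (z : ZMod p) : η ^ z.val ≠ 0 := by
  have : η ≠ 0 := by
    intro h; rw [h] at h1; simp [zero_pow hp.out.ne_zero] at h1
  exact pow_ne_zero _ this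

lemma e_conj (h1 : η ^ p = 1) (habs : ‖η‖ = 1) (z : ZMod p) :
    (starRingEnd ℂ) (η ^ z.val) = η ^ (-z).val := by
  have hne := e_ne_zero h1 z
  have hmul : η ^ z.val * η ^ (-z).val = 1 := by
    rw [← e_add h1]; simp
  have hc : (starRingEnd ℂ) (η ^ z.val) * (η ^ z.val) = 1 := by
    rw [mul_comm, Complex.mul_conj, Complex.normSq_eq_norm_sq, norm_pow, habs]
    norm_num
  have h1' : η ^ (-z).val = (η ^ z.val)⁻¹ := eq_inv_of_mul_eq_one_left (by rw [mul_comm]; exact hmul)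
  rw [h1']
  exact eq_inv_of_mul_eq_one_left hc

lemma sum_e_univ (hprim : IsPrimitiveRoot η p) : ∑ i : ZMod p, η ^ i.val = 0 := by
  have : ∑ i : ZMod p, η ^ i.val = ∑ m ∈ range p, η ^ m := by
    apply Finset.sum_nbij' (fun z : ZMod p => z.val) (fun m => (m : ZMod p))
    · intro z _; exact mem_range.2 (ZMod.val_lt z)
    · intro m _; exact mem_univ _
    · intro z _; exact ZMod.natCast_rightInverse z
    · intro m hm; exact ZMod.val_cast_of_lt (mem_range.1 hm)
    · intro z _; rfl
  rw [this]
  exact hprim.geom_sum_eq_zero hp.out.one_lt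

lemma sum_e_mul (hprim : IsPrimitiveRoot η p) {t : ZMod p} (ht : t ≠ 0) :
    ∑ i : ZMod p, η ^ (i * t).val = 0 := by
  rw [← sum_e_univ hprim]
  exact Fintype.sum_equiv (Equiv.mulRight₀ t ht) _ _ (fun i => rfl)

variable {p : ℕ} [hp : Fact p.Prime] {c d : ZMod p}

lemma I1 (hd : d + d = c) (j i : ZMod p) :
    (c*(j - i)^2 - d*i^2) + (-(d*i^2)) = c*j^2 + i*(-(2*c)*j) := by
  linear_combination (-(i^2)) * hd

lemma I2 (j' j i : ZMod p) :
    (c*(j' - i)^2 - d*i^2) + (-((c*(j - i)^2 - d*i^2))) = (c*j'^2 - c*j^2) + i*((2*c)*(j - j')) := by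
  ring

lemma I3 (hc2 : c^2 = -1) (hd : d + d = c) (h2 : (2 : ZMod p) ≠ 0) (i m : ZMod p) :
    d*(i + c*m)^2 + (i + c*m)*m = d*i^2 + d*m^2 := by
  apply mul_left_cancel₀ h2
  linear_combination (m^2*c + 2*(i*m)) * hc2 + (-(m^2) + m^2*c^2 + 2*(i*m*c)) * hd

lemma I4 (hc2 : c^2 = -1) (hd : d + d = c) (h2 : (2 : ZMod p) ≠ 0) (j i m : ZMod p) :
    (c*(j - (i + c*(m - 2*c*j)))^2 - d*(i + c*(m - 2*c*j))^2) + (i + c*(m - 2*c*j))*m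
      = d*i^2 + (-(c*j^2) + 2*j*m + d*m^2) := by
  apply mul_left_cancel₀ h2
  linear_combination (4*(j^2*c) + 4*(j^2*c^3) - 4*(m*j) - 4*(m*j*c^2) + m^2*c - 4*(i*j*c) + 2*(i*m)) * hc2
    + (-(4*(j^2*c^4)) + 4*(m*j*c^3) - m^2 - m^2*c^2 + 4*(i*j*c^2) - 2*(i*m*c) - 2*i^2) * hd

lemma I5 (hc2 : c^2 = -1) (hd : d + d = c) (z m : ZMod p) :
    -(c*(-c*z)^2) + 2*(-c*z)*m + d*m^2 = c*(z - m)^2 - d*m^2 := by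
  linear_combination (-(z^2*c)) * hc2 + (m^2) * hd



variable {p : ℕ} [hp : Fact p.Prime] {η : ℂ} {c d : ZMod p}

/-- Core computation for ⟨φ₀, φ_x⟩ = 0. -/
lemma core_B (h1 : η ^ p = 1) (hprim : IsPrimitiveRoot η p) (hd : d + d = c)
    (h2c : (2*c : ZMod p) ≠ 0)
    (s : Finset ℕ) (h0 : ∀ j ∈ s, (j : ZMod p) ≠ 0) (V : ℕ → ℂ) :
    ∑ i : ZMod p, η ^ (-(d*i^2)).val *
      ∑ j ∈ s, V j * η ^ ((c*((j : ZMod p) - i)^2 - d*i^2)).val = 0 := by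
  simp only [Finset.mul_sum]
  rw [Finset.sum_comm]
  apply Finset.sum_eq_zero
  intro j hj
  have ht : (-(2*c)*(j : ZMod p) : ZMod p) ≠ 0 :=
    mul_ne_zero (neg_ne_zero.2 h2c) (h0 j hj)
  have step : ∀ i : ZMod p,
      η ^ (-(d*i^2)).val * (V j * η ^ ((c*((j : ZMod p) - i)^2 - d*i^2)).val)
      = (V j * η ^ ((c*(j : ZMod p)^2)).val) * η ^ ((i * (-(2*c)*(j : ZMod p)))).val := by
    intro i
    have h := e_add h1 (c*((j : ZMod p) - i)^2 - d*i^2) (-(d*i^2))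
    rw [I1 hd (j : ZMod p) i] at h
    rw [e_add h1 (c*(j : ZMod p)^2) (i*(-(2*c)*(j : ZMod p)))] at h
    linear_combination (-(V j)) * h
  rw [Finset.sum_congr rfl (fun i _ => step i), ← Finset.mul_sum,
    sum_e_mul hprim ht, mul_zero]

/-- Core computation for ⟨φ_x, φ_y⟩. -/
lemma core_C (h1 : η ^ p = 1) (hprim : IsPrimitiveRoot η p)
    (h2c : (2*c : ZMod p) ≠ 0)
    (s : Finset ℕ) (hinj : ∀ j ∈ s, ∀ j' ∈ s, (j : ZMod p) = (j' : ZMod p) → j = j')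
    (U V : ℕ → ℂ) :
    ∑ i : ZMod p, (∑ j ∈ s, U j * η ^ (-(c*((j : ZMod p) - i)^2 - d*i^2)).val) *
      (∑ j' ∈ s, V j' * η ^ ((c*((j' : ZMod p) - i)^2 - d*i^2)).val)
    = (p : ℂ) * ∑ j ∈ s, U j * V j := by
  have inner_eval : ∀ j ∈ s, ∀ j' ∈ s,
      (∑ i : ZMod p, (U j * η ^ (-(c*((j : ZMod p) - i)^2 - d*i^2)).val) *
        (V j' * η ^ ((c*((j' : ZMod p) - i)^2 - d*i^2)).val))
      = if j' = j then (p : ℂ) * (U j * V j) else 0 := by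
    intro j hj j' hj'
    have step : ∀ i : ZMod p,
        (U j * η ^ (-(c*((j : ZMod p) - i)^2 - d*i^2)).val) *
        (V j' * η ^ ((c*((j' : ZMod p) - i)^2 - d*i^2)).val)
        = (U j * V j' * η ^ ((c*(j' : ZMod p)^2 - c*(j : ZMod p)^2)).val) *
          η ^ ((i * ((2*c)*((j : ZMod p) - (j' : ZMod p))))).val := by
      intro i
      have h := e_add h1 (c*((j' : ZMod p) - i)^2 - d*i^2) (-((c*((j : ZMod p) - i)^2 - d*i^2)))
      rw [I2 (j' : ZMod p) (j : ZMod p) i] at h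
      rw [e_add h1 (c*(j' : ZMod p)^2 - c*(j : ZMod p)^2)
        (i*((2*c)*((j : ZMod p) - (j' : ZMod p))))] at h
      linear_combination (-(U j * V j')) * h
    rw [Finset.sum_congr rfl (fun i _ => step i), ← Finset.mul_sum]
    by_cases hjj : j' = j
    · subst hjj
      rw [if_pos rfl]
      have harg : ∀ i : ZMod p,
          (i * ((2*c)*((j' : ZMod p) - (j' : ZMod p))) : ZMod p) = 0 := by
        intro i; ring
      have hsum1 : ∑ i : ZMod p, η ^ ((i * ((2*c)*((j' : ZMod p) - (j' : ZMod p))))).val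
          = (p : ℂ) := by
        have : ∀ i : ZMod p, η ^ ((i * ((2*c)*((j' : ZMod p) - (j' : ZMod p))))).val
            = 1 := by
          intro i; rw [harg i, ZMod.val_zero, pow_zero]
        rw [Finset.sum_congr rfl (fun i _ => this i)]
        simp [Finset.card_univ, ZMod.card]
      rw [hsum1]
      have harg2 : (c*(j' : ZMod p)^2 - c*(j' : ZMod p)^2 : ZMod p) = 0 := by ring
      rw [harg2, ZMod.val_zero, pow_zero]
      ring
    · have hne : ((j : ZMod p) - (j' : ZMod p)) ≠ 0 := by
        intro h
        exact hjj ((hinj j hj j' hj' (sub_eq_zero.mp h))).symm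
      have ht : ((2*c)*((j : ZMod p) - (j' : ZMod p)) : ZMod p) ≠ 0 := mul_ne_zero h2c hne
      rw [sum_e_mul hprim ht, mul_zero, if_neg hjj]
  calc ∑ i : ZMod p, (∑ j ∈ s, U j * η ^ (-(c*((j : ZMod p) - i)^2 - d*i^2)).val) *
      (∑ j' ∈ s, V j' * η ^ ((c*((j' : ZMod p) - i)^2 - d*i^2)).val)
      = ∑ i : ZMod p, ∑ j ∈ s, ∑ j' ∈ s,
          (U j * η ^ (-(c*((j : ZMod p) - i)^2 - d*i^2)).val) *
          (V j' * η ^ ((c*((j' : ZMod p) - i)^2 - d*i^2)).val) := by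
        simp only [Finset.sum_mul_sum]
    _ = ∑ j ∈ s, ∑ i : ZMod p, ∑ j' ∈ s,
          (U j * η ^ (-(c*((j : ZMod p) - i)^2 - d*i^2)).val) *
          (V j' * η ^ ((c*((j' : ZMod p) - i)^2 - d*i^2)).val) := Finset.sum_comm
    _ = ∑ j ∈ s, ∑ j' ∈ s, ∑ i : ZMod p,
          (U j * η ^ (-(c*((j : ZMod p) - i)^2 - d*i^2)).val) *
          (V j' * η ^ ((c*((j' : ZMod p) - i)^2 - d*i^2)).val) :=
        Finset.sum_congr rfl (fun j _ => Finset.sum_comm)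
    _ = ∑ j ∈ s, ∑ j' ∈ s, if j' = j then (p : ℂ) * (U j * V j) else 0 :=
        Finset.sum_congr rfl (fun j hj => Finset.sum_congr rfl (fun j' hj' =>
          inner_eval j hj j' hj'))
    _ = ∑ j ∈ s, (p : ℂ) * (U j * V j) := by
        apply Finset.sum_congr rfl; intro j hj
        rw [Finset.sum_ite_eq' s j (fun _ => (p : ℂ) * (U j * V j)), if_pos hj]
    _ = (p : ℂ) * ∑ j ∈ s, U j * V j := by rw [Finset.mul_sum]

/-- Core computation for F φ₀. -/
lemma core_D (h1 : η ^ p = 1) (hc2 : c^2 = -1) (hd : d + d = c) (h2 : (2 : ZMod p) ≠ 0)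
    (m : ZMod p) :
    ∑ i : ZMod p, η ^ ((i*m)).val * η ^ ((d*i^2)).val
    = (∑ i : ZMod p, η ^ ((d*i^2)).val) * η ^ ((d*m^2)).val := by
  have step1 : ∀ i : ZMod p, η ^ ((i*m)).val * η ^ ((d*i^2)).val = η ^ ((d*i^2 + i*m)).val := by
    intro i; rw [e_add h1]; ring
  rw [Finset.sum_congr rfl (fun i _ => step1 i)]
  have reindex : ∑ i : ZMod p, η ^ ((d*i^2 + i*m)).val
      = ∑ i : ZMod p, η ^ ((d*(i + c*m)^2 + (i + c*m)*m)).val :=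
    (Equiv.sum_comp (Equiv.addRight (c*m)) (fun i => η ^ ((d*i^2 + i*m)).val)).symm
  rw [reindex]
  have step2 : ∀ i : ZMod p, η ^ ((d*(i + c*m)^2 + (i + c*m)*m)).val
      = η ^ ((d*i^2)).val * η ^ ((d*m^2)).val := by
    intro i; rw [I3 hc2 hd h2 i m, e_add h1]
  rw [Finset.sum_congr rfl (fun i _ => step2 i), ← Finset.sum_mul]

/-- Core computation for F φ_x. -/
lemma core_E (h1 : η ^ p = 1) (hc2 : c^2 = -1) (hd : d + d = c) (h2 : (2 : ZMod p) ≠ 0)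
    (s : Finset ℕ) (V : ℕ → ℂ) (m : ZMod p) :
    ∑ i : ZMod p, η ^ ((i*m)).val * ∑ j ∈ s, V j * η ^ ((c*((j : ZMod p) - i)^2 - d*i^2)).val
    = (∑ i : ZMod p, η ^ ((d*i^2)).val) *
      ∑ j ∈ s, V j * η ^ ((-(c*(j : ZMod p)^2) + 2*(j : ZMod p)*m + d*m^2)).val := by
  simp only [Finset.mul_sum]
  rw [Finset.sum_comm]
  have per_j : ∀ j ∈ s,
      ∑ i : ZMod p, η ^ ((i*m)).val * (V j * η ^ ((c*((j : ZMod p) - i)^2 - d*i^2)).val)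
      = V j * ((∑ i : ZMod p, η ^ ((d*i^2)).val) *
          η ^ ((-(c*(j : ZMod p)^2) + 2*(j : ZMod p)*m + d*m^2)).val) := by
    intro j _
    set jz := (j : ZMod p)
    have step1 : ∀ i : ZMod p,
        η ^ ((i*m)).val * (V j * η ^ ((c*(jz - i)^2 - d*i^2)).val)
        = V j * η ^ (((c*(jz - i)^2 - d*i^2) + i*m)).val := by
      intro i; rw [e_add h1]; ring
    rw [Finset.sum_congr rfl (fun i _ => step1 i), ← Finset.mul_sum]
    have reindex : ∑ i : ZMod p, η ^ (((c*(jz - i)^2 - d*i^2) + i*m)).val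
        = ∑ i : ZMod p,
            η ^ (((c*(jz - (i + c*(m - 2*c*jz)))^2 - d*(i + c*(m - 2*c*jz))^2)
              + (i + c*(m - 2*c*jz))*m)).val :=
      (Equiv.sum_comp (Equiv.addRight (c*(m - 2*c*jz)))
        (fun i => η ^ (((c*(jz - i)^2 - d*i^2) + i*m)).val)).symm
    rw [reindex]
    have step2 : ∀ i : ZMod p,
        η ^ (((c*(jz - (i + c*(m - 2*c*jz)))^2 - d*(i + c*(m - 2*c*jz))^2)
          + (i + c*(m - 2*c*jz))*m)).val
        = η ^ ((d*i^2)).val * η ^ ((-(c*jz^2) + 2*jz*m + d*m^2)).val := by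
      intro i
      rw [show (c*(jz - (i + c*(m - 2*c*jz)))^2 - d*(i + c*(m - 2*c*jz))^2)
          + (i + c*(m - 2*c*jz))*m = d*i^2 + (-(c*jz^2) + 2*jz*m + d*m^2)
          from I4 hc2 hd h2 jz i m, e_add h1]
    rw [Finset.sum_congr rfl (fun i _ => step2 i), ← Finset.sum_mul]
  rw [Finset.sum_congr rfl per_j]
  exact Finset.sum_congr rfl (fun j _ => by ring)

end PhiAux

open Finset PhiAux in
set_option maxHeartbeats 1000000 in
/-- Φ_p = {φ_x : 0 ≤ x ≤ p−1} is an orthonormal basis of ℂ(F_p) and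
every φ_x is an eigenvector of the discrete Fourier transform F. -/
theorem phi_orthonormal_basis_of_eigenvectors (p : ℕ) [Fact p.Prime] (hp4 : p % 4 = 1)
    (a : ZMod p) (ha : orderOf a = p - 1)
    (log : ZMod p → ℕ)
    (hlog : ∀ j : ZMod p, j ≠ 0 → log j ≤ p - 2 ∧ a ^ log j = j)
    (θ η : ℂ)
    (hθ : θ = Complex.exp (2 * Real.pi * Complex.I / ((p : ℂ) - 1)))
    (hη : η = Complex.exp (2 * Real.pi * Complex.I / (p : ℂ)))
    (k : ℕ) (hk : k = (p - 1) / 4)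
    (F : EuclideanSpace ℂ (ZMod p) → EuclideanSpace ℂ (ZMod p))
    (hF : ∀ φ : EuclideanSpace ℂ (ZMod p), ∀ j : ZMod p,
      F φ j = (1 / Real.sqrt p : ℂ) * ∑ i : ZMod p, η ^ (i * j).val * φ i)
    (φ : Fin p → EuclideanSpace ℂ (ZMod p))
    (hφ0 : ∀ i : ZMod p,
      φ 0 i = (1 / Real.sqrt p : ℂ) * η ^ (2⁻¹ * a ^ k * i ^ 2).val)
    (hφx : ∀ x : Fin p, x ≠ 0 → ∀ i : ZMod p,
      φ x i = (1 / Real.sqrt ((p : ℝ) * ((p : ℝ) - 1)) : ℂ) *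
        ∑ j ∈ Finset.Icc 1 (p - 1),
          θ ^ ((x : ℕ) * log (j : ZMod p)) *
          η ^ (a ^ k * ((j : ZMod p) - i) ^ 2 - 2⁻¹ * a ^ k * i ^ 2).val) :
    (∃ b : OrthonormalBasis (Fin p) ℂ (EuclideanSpace ℂ (ZMod p)),
      ∀ x, b x = φ x) ∧
    (∀ x : Fin p, ∃ μ : ℂ, F (φ x) = μ • φ x) := by
  have hP := (inferInstance : Fact p.Prime).out
  have hp5 : 5 ≤ p := by have := hP.two_le; omega
  have hpne0 : p ≠ 0 := by omega
  -- basic complex facts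
  have hpC : (p : ℂ) ≠ 0 := Nat.cast_ne_zero.mpr hpne0
  have hp1C : (p : ℂ) - 1 ≠ 0 := by
    rw [sub_ne_zero]
    intro h
    have hp1 : p = 1 := by exact_mod_cast h
    omega
  -- η facts
  have hηprim : IsPrimitiveRoot η p := by rw [hη]; exact Complex.isPrimitiveRoot_exp p hpne0
  have hη1 : η ^ p = 1 := hηprim.pow_eq_one
  have hηabs : ‖η‖ = 1 := by
    rw [hη, show (2 * Real.pi * Complex.I / (p : ℂ)) = ((2 * Real.pi / p : ℝ) : ℂ) * Complex.I
      by push_cast; ring]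
    exact Complex.norm_exp_ofReal_mul_I _
  -- θ facts
  have hcastp1 : ((p - 1 : ℕ) : ℂ) = (p : ℂ) - 1 := by
    push_cast [Nat.cast_sub hP.one_le]; ring
  have hθprim : IsPrimitiveRoot θ (p - 1) := by
    rw [hθ, ← hcastp1]
    exact Complex.isPrimitiveRoot_exp (p - 1) (by omega)
  have hθ1 : θ ^ (p - 1) = 1 := hθprim.pow_eq_one
  have hθabs : ‖θ‖ = 1 := by
    rw [hθ, show (2 * Real.pi * Complex.I / ((p : ℂ) - 1))
        = ((2 * Real.pi / (p - 1 : ℝ) : ℝ) : ℂ) * Complex.I by push_cast; ring]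
    exact Complex.norm_exp_ofReal_mul_I _
  have hθne0 : θ ≠ 0 := by
    intro h; rw [h] at hθabs; simp at hθabs
  have hθconj : (starRingEnd ℂ) θ = θ⁻¹ := by
    have hc : (starRingEnd ℂ) θ * θ = 1 := by
      rw [mul_comm, Complex.mul_conj, Complex.normSq_eq_norm_sq, hθabs]; norm_num
    exact eq_inv_of_mul_eq_one_left hc
  -- the square root of -1
  set c := a ^ k with hcdef
  have ha1 : a ^ (p - 1) = 1 := by rw [← ha]; exact pow_orderOf_eq_one a
  have ha0 : a ≠ 0 := by
    intro h
    rw [h, zero_pow (by omega : p - 1 ≠ 0)] at ha1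
    exact zero_ne_one ha1
  have hk4 : 4 * k = p - 1 := by omega
  have hc2 : c ^ 2 = -1 := by
    have hsq : (a ^ (2 * k)) * (a ^ (2 * k)) = 1 := by
      rw [← pow_add]
      rw [show 2 * k + 2 * k = p - 1 by omega]
      exact ha1
    have hne1 : a ^ (2 * k) ≠ 1 := by
      intro h
      have hdvd : (p - 1) ∣ 2 * k := by rw [← ha]; exact orderOf_dvd_of_pow_eq_one h
      have hklb : 1 ≤ k := by omega
      have := Nat.le_of_dvd (by omega) hdvd
      omega
    rcases mul_self_eq_one_iff.mp hsq with h | h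
    · exact absurd h hne1
    · rw [hcdef, ← pow_mul, show k * 2 = 2 * k by ring, h]
  have hc0 : c ≠ 0 := by
    intro h
    rw [h] at hc2
    simp only [ne_eq, zero_pow, OfNat.ofNat_ne_zero, not_false_eq_true] at hc2
    exact one_ne_zero (neg_eq_zero.mp hc2.symm)
  have h2 : (2 : ZMod p) ≠ 0 := by
    intro h
    have h2' : ((2 : ℕ) : ZMod p) = 0 := by exact_mod_cast h
    rw [ZMod.natCast_eq_zero_iff] at h2'
    have := Nat.le_of_dvd (by norm_num) h2'
    omega
  have h2c : (2 * c : ZMod p) ≠ 0 := mul_ne_zero h2 hc0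
  have hcn0 : (-c : ZMod p) ≠ 0 := neg_ne_zero.2 hc0
  set d := 2⁻¹ * c with hddef
  have hd : d + d = c := by
    have h2i : (2 : ZMod p)⁻¹ * 2 = 1 := inv_mul_cancel₀ h2
    rw [hddef]; linear_combination c * h2i
  -- injectivity of powers of a below p-1
  have hpowinj : ∀ m n : ℕ, m < p - 1 → n < p - 1 → a ^ m = a ^ n → m = n := by
    intro m n hm hn h
    exact pow_injOn_Iio_orderOf (x := a) (by simp only [Set.mem_Iio, ha]; exact hm)
      (by simp only [Set.mem_Iio, ha]; exact hn) h
  have hmodeq : ∀ m n : ℕ, a ^ m = a ^ n → m ≡ n [MOD p - 1] := by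
    intro m n h
    have h1 : a ^ (m % (p - 1)) = a ^ (n % (p - 1)) := by
      rw [← pow_eq_pow_mod m ha1, ← pow_eq_pow_mod n ha1, h]
    exact hpowinj _ _ (Nat.mod_lt _ (by omega)) (Nat.mod_lt _ (by omega)) h1
  -- Icc 1 (p-1) ↔ nonzero elements of ZMod p
  have hIcc : ∀ f : ZMod p → ℂ, ∑ j ∈ Finset.Icc 1 (p - 1), f ((j : ZMod p))
      = ∑ z ∈ Finset.univ.erase (0 : ZMod p), f z := by
    intro f
    refine Finset.sum_nbij' (i := fun (j : ℕ) => ((j : ZMod p))) (j := fun (z : ZMod p) => z.val)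
      ?_ ?_ ?_ ?_ ?_
    · intro j hj
      rw [Finset.mem_Icc] at hj
      refine Finset.mem_erase.2 ⟨?_, Finset.mem_univ _⟩
      intro h0
      have hvv : (ZMod.val ((j : ZMod p))) = j := ZMod.val_cast_of_lt (by omega)
      rw [h0, ZMod.val_zero] at hvv
      omega
    · intro z hz
      have hz0 := (Finset.mem_erase.1 hz).1
      have hv0 : z.val ≠ 0 := fun h => hz0 ((ZMod.val_eq_zero z).mp h)
      have := ZMod.val_lt z
      exact Finset.mem_Icc.2 ⟨by omega, by omega⟩
    · intro j hj
      rw [Finset.mem_Icc] at hj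
      exact ZMod.val_cast_of_lt (by omega)
    · intro z _; exact ZMod.natCast_rightInverse z
    · intro j _; rfl
  -- cast is injective on Icc 1 (p-1)
  have hinj : ∀ j ∈ Finset.Icc 1 (p - 1), ∀ j' ∈ Finset.Icc 1 (p - 1),
      (j : ZMod p) = (j' : ZMod p) → j = j' := by
    intro j hj j' hj' h
    rw [Finset.mem_Icc] at hj hj'
    have h1 : (ZMod.val ((j : ZMod p))) = j := ZMod.val_cast_of_lt (by omega)
    have h2' : (ZMod.val ((j' : ZMod p))) = j' := ZMod.val_cast_of_lt (by omega)
    rw [← h1, ← h2', h]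
  -- log gives a bijection from nonzero elements to range (p-1)
  have hlog_sum : ∀ g : ℕ → ℂ, ∑ z ∈ Finset.univ.erase (0 : ZMod p), g (log z)
      = ∑ t ∈ Finset.range (p - 1), g t := by
    intro g
    refine Finset.sum_nbij' (i := fun (z : ZMod p) => log z) (j := fun (t : ℕ) => a ^ t)
      ?_ ?_ ?_ ?_ ?_
    · intro z hz
      have := (hlog z (Finset.mem_erase.1 hz).1).1
      exact Finset.mem_range.2 (by omega)
    · intro t _
      exact Finset.mem_erase.2 ⟨pow_ne_zero _ ha0, Finset.mem_univ _⟩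
    · intro z hz; exact (hlog z (Finset.mem_erase.1 hz).1).2
    · intro t ht
      have h1 := hlog (a ^ t) (pow_ne_zero _ ha0)
      exact hpowinj _ _ (by omega) (Finset.mem_range.1 ht) h1.2
    · intro z _; rfl
  -- multiplicativity of the character
  have hχmul : ∀ (x : ℕ) (v w : ZMod p), v ≠ 0 → w ≠ 0 →
      θ ^ (x * log (v * w)) = θ ^ (x * log v) * θ ^ (x * log w) := by
    intro x v w hv hw
    have hmod : log (v * w) ≡ log v + log w [MOD p - 1] := by
      apply hmodeq
      rw [(hlog (v * w) (mul_ne_zero hv hw)).2, pow_add, (hlog v hv).2, (hlog w hw).2]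
    rw [← pow_add, ← Nat.mul_add]
    exact pow_eq_of_modEq hθ1 (hmod.mul_left x)
  have hconj : ∀ z : ZMod p, (starRingEnd ℂ) (η ^ z.val) = η ^ (-z).val :=
    fun z => e_conj hη1 hηabs z
  -- scalar facts
  have hspconj : (starRingEnd ℂ) (1 / Real.sqrt p : ℂ) = (1 / Real.sqrt p : ℂ) := by
    rw [map_div₀, map_one, Complex.conj_ofReal]
  have hsqconj : (starRingEnd ℂ) (1 / Real.sqrt ((p : ℝ) * ((p : ℝ) - 1)) : ℂ)
      = (1 / Real.sqrt ((p : ℝ) * ((p : ℝ) - 1)) : ℂ) := by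
    rw [map_div₀, map_one, Complex.conj_ofReal]
  have hsp2 : (1 / Real.sqrt p : ℂ) * (1 / Real.sqrt p : ℂ) = 1 / (p : ℂ) := by
    rw [div_mul_div_comm, one_mul, ← Complex.ofReal_mul,
      Real.mul_self_sqrt (by positivity)]
    norm_num
  have hpR : (5 : ℝ) ≤ (p : ℝ) := by exact_mod_cast hp5
  have hsq2 : (1 / Real.sqrt ((p : ℝ) * ((p : ℝ) - 1)) : ℂ) *
      (1 / Real.sqrt ((p : ℝ) * ((p : ℝ) - 1)) : ℂ)
      = 1 / ((p : ℂ) * ((p : ℂ) - 1)) := by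
    rw [div_mul_div_comm, one_mul, ← Complex.ofReal_mul,
      Real.mul_self_sqrt (by nlinarith)]
    push_cast
    ring
  -- nonzero-ness of casts from Icc
  have hIccne : ∀ j ∈ Finset.Icc 1 (p - 1), (j : ZMod p) ≠ 0 := by
    intro j hj h0
    rw [Finset.mem_Icc] at hj
    have hvv := ZMod.val_cast_of_lt (show j < p by omega)
    rw [h0, ZMod.val_zero] at hvv
    omega
  -- the Gauss-type sum
  set S : ℂ := ∑ i : ZMod p, η ^ ((d * i ^ 2)).val with hSdef
  -- diagonal inner product at 0
  have hA : ∑ i : ZMod p, (starRingEnd ℂ) (φ 0 i) * φ 0 i = 1 := by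
    have hterm : ∀ i : ZMod p, (starRingEnd ℂ) (φ 0 i) * φ 0 i = 1 / (p : ℂ) := by
      intro i
      rw [hφ0 i, map_mul, hspconj, hconj]
      have hmulone : η ^ (-(d * i ^ 2)).val * η ^ ((d * i ^ 2)).val = 1 := by
        rw [← e_add hη1]
        simp
      calc (1 / Real.sqrt p : ℂ) * η ^ (-(d * i ^ 2)).val *
            ((1 / Real.sqrt p : ℂ) * η ^ ((d * i ^ 2)).val)
          = ((1 / Real.sqrt p : ℂ) * (1 / Real.sqrt p : ℂ)) *
            (η ^ (-(d * i ^ 2)).val * η ^ ((d * i ^ 2)).val) := by ring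
        _ = 1 / (p : ℂ) := by rw [hmulone, hsp2, mul_one]
    rw [Finset.sum_congr rfl (fun i _ => hterm i), Finset.sum_const, Finset.card_univ,
      ZMod.card, nsmul_eq_mul]
    field_simp
  -- off-diagonal with 0
  have hB0 : ∀ y : Fin p, y ≠ 0 → ∑ i : ZMod p, (starRingEnd ℂ) (φ 0 i) * φ y i = 0 := by
    intro y hy
    have hterm : ∀ i : ZMod p, (starRingEnd ℂ) (φ 0 i) * φ y i
        = ((1 / Real.sqrt p : ℂ) * (1 / Real.sqrt ((p : ℝ) * ((p : ℝ) - 1)) : ℂ)) *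
          (η ^ (-(d * i ^ 2)).val *
            ∑ j ∈ Finset.Icc 1 (p - 1), θ ^ ((y : ℕ) * log (j : ZMod p)) *
              η ^ ((c * ((j : ZMod p) - i) ^ 2 - d * i ^ 2)).val) := by
      intro i
      rw [hφ0 i, hφx y hy i, map_mul, hspconj, hconj]
      ring
    rw [Finset.sum_congr rfl (fun i _ => hterm i), ← Finset.mul_sum,
      core_B hη1 hηprim hd h2c (Finset.Icc 1 (p - 1)) hIccne
        (fun j => θ ^ ((y : ℕ) * log (j : ZMod p))), mul_zero]
  -- general inner product of nonzero-indexed vectors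
  have hC : ∀ x y : Fin p, x ≠ 0 → y ≠ 0 →
      ∑ i : ZMod p, (starRingEnd ℂ) (φ x i) * φ y i
      = (1 / ((p : ℂ) * ((p : ℂ) - 1))) *
        ((p : ℂ) * ∑ t ∈ Finset.range (p - 1), ((θ⁻¹) ^ (x : ℕ) * θ ^ (y : ℕ)) ^ t) := by
    intro x y hx hy
    have hconjφ : ∀ i : ZMod p, (starRingEnd ℂ) (φ x i)
        = (1 / Real.sqrt ((p : ℝ) * ((p : ℝ) - 1)) : ℂ) *
          ∑ j ∈ Finset.Icc 1 (p - 1), (starRingEnd ℂ) (θ ^ ((x : ℕ) * log (j : ZMod p))) *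
            η ^ (-(c * ((j : ZMod p) - i) ^ 2 - d * i ^ 2)).val := by
      intro i
      rw [hφx x hx i, map_mul, hsqconj, map_sum]
      refine congrArg _ (Finset.sum_congr rfl (fun j _ => ?_))
      rw [map_mul, hconj]
    have hterm : ∀ i : ZMod p, (starRingEnd ℂ) (φ x i) * φ y i
        = ((1 / Real.sqrt ((p : ℝ) * ((p : ℝ) - 1)) : ℂ) *
            (1 / Real.sqrt ((p : ℝ) * ((p : ℝ) - 1)) : ℂ)) *
          ((∑ j ∈ Finset.Icc 1 (p - 1), (starRingEnd ℂ) (θ ^ ((x : ℕ) * log (j : ZMod p))) *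
              η ^ (-(c * ((j : ZMod p) - i) ^ 2 - d * i ^ 2)).val) *
           (∑ j' ∈ Finset.Icc 1 (p - 1), θ ^ ((y : ℕ) * log (j' : ZMod p)) *
              η ^ ((c * ((j' : ZMod p) - i) ^ 2 - d * i ^ 2)).val)) := by
      intro i
      rw [hconjφ i, hφx y hy i]
      ring
    rw [Finset.sum_congr rfl (fun i _ => hterm i), ← Finset.mul_sum,
      core_C hη1 hηprim h2c (Finset.Icc 1 (p - 1)) hinj
        (fun j => (starRingEnd ℂ) (θ ^ ((x : ℕ) * log (j : ZMod p))))
        (fun j => θ ^ ((y : ℕ) * log (j : ZMod p))), hsq2]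
    have hjsum : ∑ j ∈ Finset.Icc 1 (p - 1),
        (starRingEnd ℂ) (θ ^ ((x : ℕ) * log ((j : ZMod p)))) * θ ^ ((y : ℕ) * log ((j : ZMod p)))
        = ∑ t ∈ Finset.range (p - 1), ((θ⁻¹) ^ (x : ℕ) * θ ^ (y : ℕ)) ^ t := by
      rw [hIcc (fun z => (starRingEnd ℂ) (θ ^ ((x : ℕ) * log z)) * θ ^ ((y : ℕ) * log z)),
        hlog_sum (fun t => (starRingEnd ℂ) (θ ^ ((x : ℕ) * t)) * θ ^ ((y : ℕ) * t))]
      refine Finset.sum_congr rfl (fun t _ => ?_)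
      rw [map_pow, hθconj, pow_mul, pow_mul, mul_pow]
    rw [hjsum]
  -- sums of powers of roots of unity over range (p-1)
  have hwdiag : ∀ x : Fin p,
      ∑ t ∈ Finset.range (p - 1), ((θ⁻¹) ^ (x : ℕ) * θ ^ (x : ℕ)) ^ t = (p : ℂ) - 1 := by
    intro x
    have hw1 : (θ⁻¹) ^ (x : ℕ) * θ ^ (x : ℕ) = 1 := by
      rw [← mul_pow, inv_mul_cancel₀ hθne0, one_pow]
    rw [hw1]
    simp only [one_pow, Finset.sum_const, Finset.card_range, nsmul_eq_mul, mul_one]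
    exact hcastp1
  have hwoff : ∀ x y : Fin p, x ≠ 0 → y ≠ 0 → x ≠ y →
      ∑ t ∈ Finset.range (p - 1), ((θ⁻¹) ^ (x : ℕ) * θ ^ (y : ℕ)) ^ t = 0 := by
    intro x y hx hy hxy
    have hwN : ((θ⁻¹) ^ (x : ℕ) * θ ^ (y : ℕ)) ^ (p - 1) = 1 := by
      have h1 : (θ⁻¹) ^ (p - 1) = 1 := by rw [inv_pow, hθ1, inv_one]
      rw [mul_pow, ← pow_mul, mul_comm (x : ℕ) (p - 1), pow_mul, h1, one_pow, one_mul,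
        ← pow_mul, mul_comm (y : ℕ) (p - 1), pow_mul, hθ1, one_pow]
    have hwne : ((θ⁻¹) ^ (x : ℕ) * θ ^ (y : ℕ)) ≠ 1 := by
      intro hw1
      rw [inv_pow, inv_mul_eq_one₀ (pow_ne_zero _ hθne0)] at hw1
      have hxv : (x : ℕ) ≠ 0 := fun h => hx (Fin.ext (by simpa using h))
      have hyv : (y : ℕ) ≠ 0 := fun h => hy (Fin.ext (by simpa using h))
      have hxlt : (x : ℕ) < p := x.isLt
      have hylt : (y : ℕ) < p := y.isLt
      have key : (x : ℕ) - 1 = (y : ℕ) - 1 := by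
        apply hθprim.pow_inj (by omega) (by omega)
        have e1 : θ ^ ((x : ℕ) - 1) * θ = θ ^ ((y : ℕ) - 1) * θ := by
          rw [← pow_succ, ← pow_succ, show (x : ℕ) - 1 + 1 = (x : ℕ) by omega,
            show (y : ℕ) - 1 + 1 = (y : ℕ) by omega]
          exact hw1
        exact mul_right_cancel₀ hθne0 e1
      exact hxy (Fin.ext (by omega))
    rw [geom_sum_eq hwne, hwN]
    simp
  -- orthonormality
  have horth : Orthonormal ℂ φ := by
    rw [orthonormal_iff_ite]
    intro x y
    have hip : (inner ℂ (φ x) (φ y) : ℂ) = ∑ i : ZMod p, (starRingEnd ℂ) (φ x i) * φ y i := by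
      rw [PiLp.inner_apply]
      simp [RCLike.inner_apply, mul_comm]
    rw [hip]
    by_cases hx : x = 0 <;> by_cases hy : y = 0
    · subst hx; subst hy
      rw [if_pos rfl]
      exact hA
    · subst hx
      rw [if_neg (fun h => hy h.symm)]
      exact hB0 y hy
    · subst hy
      rw [if_neg hx]
      calc ∑ i : ZMod p, (starRingEnd ℂ) (φ x i) * φ 0 i
          = (starRingEnd ℂ) (∑ i : ZMod p, (starRingEnd ℂ) (φ 0 i) * φ x i) := by
            rw [map_sum]
            refine Finset.sum_congr rfl (fun i _ => ?_)
            rw [map_mul, Complex.conj_conj]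
            ring
        _ = 0 := by rw [hB0 x hx, map_zero]
    · rw [hC x y hx hy]
      by_cases hxy : x = y
      · subst hxy
        rw [if_pos rfl, hwdiag x]
        field_simp
      · rw [if_neg hxy, hwoff x y hx hy hxy, mul_zero, mul_zero]
  constructor
  · -- orthonormal basis
    have hcard : Fintype.card (Fin p) = Module.finrank ℂ (EuclideanSpace ℂ (ZMod p)) := by
      simp [ZMod.card]
    let b := basisOfLinearIndependentOfCardEqFinrank horth.linearIndependent hcard
    have hb : ⇑b = φ := coe_basisOfLinearIndependentOfCardEqFinrank _ _
    exact ⟨b.toOrthonormalBasis (by rwa [hb]), fun x => by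
      rw [Module.Basis.coe_toOrthonormalBasis, hb]⟩
  · -- eigenvectors
    intro x
    by_cases hx : x = 0
    · subst hx
      refine ⟨(1 / Real.sqrt p : ℂ) * S, ?_⟩
      ext m
      rw [hF (φ 0) m]
      have hterm : ∀ i : ZMod p, η ^ ((i * m)).val * φ 0 i
          = (1 / Real.sqrt p : ℂ) * (η ^ ((i * m)).val * η ^ ((d * i ^ 2)).val) := by
        intro i
        rw [hφ0 i]
        ring
      rw [Finset.sum_congr rfl (fun i _ => hterm i), ← Finset.mul_sum,
        core_D hη1 hc2 hd h2 m]
      rw [PiLp.smul_apply, smul_eq_mul, hφ0 m]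
      ring
    · refine ⟨(1 / Real.sqrt p : ℂ) * S * θ ^ ((x : ℕ) * log (-c)), ?_⟩
      ext m
      rw [hF (φ x) m]
      have hterm : ∀ i : ZMod p, η ^ ((i * m)).val * φ x i
          = (1 / Real.sqrt ((p : ℝ) * ((p : ℝ) - 1)) : ℂ) *
            (η ^ ((i * m)).val * ∑ j ∈ Finset.Icc 1 (p - 1),
              θ ^ ((x : ℕ) * log (j : ZMod p)) *
              η ^ ((c * ((j : ZMod p) - i) ^ 2 - d * i ^ 2)).val) := by
        intro i
        rw [hφx x hx i]
        ring
      rw [Finset.sum_congr rfl (fun i _ => hterm i), ← Finset.mul_sum,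
        core_E hη1 hc2 hd h2 (Finset.Icc 1 (p - 1))
          (fun j => θ ^ ((x : ℕ) * log (j : ZMod p))) m]
      have hjs : ∑ j ∈ Finset.Icc 1 (p - 1), θ ^ ((x : ℕ) * log ((j : ZMod p))) *
            η ^ ((-(c * ((j : ZMod p)) ^ 2) + 2 * ((j : ZMod p)) * m + d * m ^ 2)).val
          = θ ^ ((x : ℕ) * log (-c)) *
            ∑ j ∈ Finset.Icc 1 (p - 1), θ ^ ((x : ℕ) * log ((j : ZMod p))) *
              η ^ ((c * ((j : ZMod p) - m) ^ 2 - d * m ^ 2)).val := by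
        calc ∑ j ∈ Finset.Icc 1 (p - 1), θ ^ ((x : ℕ) * log ((j : ZMod p))) *
              η ^ ((-(c * ((j : ZMod p)) ^ 2) + 2 * ((j : ZMod p)) * m + d * m ^ 2)).val
            = ∑ z ∈ Finset.univ.erase (0 : ZMod p), θ ^ ((x : ℕ) * log z) *
              η ^ ((-(c * z ^ 2) + 2 * z * m + d * m ^ 2)).val :=
              hIcc (fun z => θ ^ ((x : ℕ) * log z) *
                η ^ ((-(c * z ^ 2) + 2 * z * m + d * m ^ 2)).val)
          _ = ∑ z ∈ Finset.univ.erase (0 : ZMod p), θ ^ ((x : ℕ) * log (-c)) *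
              (θ ^ ((x : ℕ) * log z) * η ^ ((c * (z - m) ^ 2 - d * m ^ 2)).val) := ?_
          _ = θ ^ ((x : ℕ) * log (-c)) * ∑ z ∈ Finset.univ.erase (0 : ZMod p),
              θ ^ ((x : ℕ) * log z) * η ^ ((c * (z - m) ^ 2 - d * m ^ 2)).val := by
              rw [← Finset.mul_sum]
          _ = θ ^ ((x : ℕ) * log (-c)) *
              ∑ j ∈ Finset.Icc 1 (p - 1), θ ^ ((x : ℕ) * log ((j : ZMod p))) *
                η ^ ((c * ((j : ZMod p) - m) ^ 2 - d * m ^ 2)).val := by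
              rw [hIcc (fun z => θ ^ ((x : ℕ) * log z) *
                η ^ ((c * (z - m) ^ 2 - d * m ^ 2)).val)]
        symm
        refine Finset.sum_nbij' (i := fun (z : ZMod p) => -c * z)
          (j := fun (z : ZMod p) => (-c)⁻¹ * z) ?_ ?_ ?_ ?_ ?_
        · intro z hz
          exact Finset.mem_erase.2
            ⟨mul_ne_zero hcn0 (Finset.mem_erase.1 hz).1, Finset.mem_univ _⟩
        · intro z hz
          exact Finset.mem_erase.2
            ⟨mul_ne_zero (inv_ne_zero hcn0) (Finset.mem_erase.1 hz).1, Finset.mem_univ _⟩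
        · intro z _
          rw [← mul_assoc, inv_mul_cancel₀ hcn0, one_mul]
        · intro z _
          rw [← mul_assoc, mul_inv_cancel₀ hcn0, one_mul]
        · intro z hz
          rw [hχmul (x : ℕ) (-c) z hcn0 (Finset.mem_erase.1 hz).1,
            show (-(c * (-c * z) ^ 2) + 2 * (-c * z) * m + d * m ^ 2 : ZMod p)
              = c * (z - m) ^ 2 - d * m ^ 2 from I5 hc2 hd z m]
          ring
      rw [hjs, PiLp.smul_apply, smul_eq_mul, hφx x hx m]
      ring
end

section
/- For every integer x with 0 ≤ x ≤ p−1, the composed operator S_{2⁻¹a^k} ∘ N_{4⁻¹a^k} ∘ F ∘ N_{2a^{3k}} applied to ψ_x equals σ(2⁻¹a^k) · φ_x, where σ is the Legendre symbol mod p. -/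
/-- For 0 ≤ x ≤ p−1,
(S_{2⁻¹a^k} ∘ N_{4⁻¹a^k} ∘ F ∘ N_{2a^{3k}}) ψ_x = σ(2⁻¹a^k) · φ_x. -/
theorem oscillator_transform_formula (p : ℕ) [Fact p.Prime] (hp4 : p % 4 = 1)
    (a : ZMod p) (ha : orderOf a = p - 1)
    (log : ZMod p → ℕ)
    (hlog : ∀ j : ZMod p, j ≠ 0 → log j ≤ p - 2 ∧ a ^ log j = j)
    (θ η : ℂ)
    (hθ : θ = Complex.exp (2 * Real.pi * Complex.I / ((p : ℂ) - 1)))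
    (hη : η = Complex.exp (2 * Real.pi * Complex.I / (p : ℂ)))
    (k : ℕ) (hk : k = (p - 1) / 4)
    (S : ZMod p → (ZMod p → ℂ) → (ZMod p → ℂ))
    (hS : ∀ c : ZMod p, ∀ φ : ZMod p → ℂ, ∀ i : ZMod p,
      S c φ i = (legendreSym p c.val : ℂ) * φ (c⁻¹ * i))
    (N : ZMod p → (ZMod p → ℂ) → (ZMod p → ℂ))
    (hN : ∀ b : ZMod p, ∀ φ : ZMod p → ℂ, ∀ i : ZMod p,
      N b φ i = η ^ (-(2⁻¹ * b * i ^ 2)).val * φ i)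
    (F : (ZMod p → ℂ) → (ZMod p → ℂ))
    (hF : ∀ φ : ZMod p → ℂ, ∀ j : ZMod p,
      F φ j = (1 / Real.sqrt p : ℂ) * ∑ i : ZMod p, η ^ (i * j).val * φ i)
    (ψ : Fin p → ZMod p → ℂ)
    (hψ00 : ψ 0 0 = 1)
    (hψ0 : ∀ i : ZMod p, i ≠ 0 → ψ 0 i = 0)
    (hψx0 : ∀ x : Fin p, x ≠ 0 → ψ x 0 = 0)
    (hψx : ∀ x : Fin p, x ≠ 0 → ∀ i : ZMod p, i ≠ 0 →
      ψ x i = (1 / Real.sqrt ((p : ℝ) - 1) : ℂ) * θ ^ ((x : ℕ) * log i))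
    (φ : Fin p → ZMod p → ℂ)
    (hφ0 : ∀ i : ZMod p,
      φ 0 i = (1 / Real.sqrt p : ℂ) * η ^ (2⁻¹ * a ^ k * i ^ 2).val)
    (hφx : ∀ x : Fin p, x ≠ 0 → ∀ i : ZMod p,
      φ x i = (1 / Real.sqrt ((p : ℝ) * ((p : ℝ) - 1)) : ℂ) *
        ∑ j ∈ Finset.Icc 1 (p - 1),
          θ ^ ((x : ℕ) * log (j : ZMod p)) *
          η ^ (a ^ k * ((j : ZMod p) - i) ^ 2 - 2⁻¹ * a ^ k * i ^ 2).val) :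
    ∀ x : Fin p,
      S (2⁻¹ * a ^ k) (N (4⁻¹ * a ^ k) (F (N (2 * a ^ (3 * k)) (ψ x)))) =
        (legendreSym p (2⁻¹ * a ^ k : ZMod p).val : ℂ) • φ x := by
  intro x
  have hp : p.Prime := Fact.out
  have hp5 : 5 ≤ p := by
    by_contra h
    push_neg at h
    interval_cases p <;> first | omega | exact absurd hp (by norm_num)
  have h2ne : (2 : ZMod p) ≠ 0 := by
    have h := ZMod.natCast_eq_zero_iff 2 p
    push_cast at h
    rw [Ne, h]
    intro hd
    have := Nat.le_of_dvd (by norm_num) hd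
    omega
  have h4ne : (4 : ZMod p) ≠ 0 := by
    have h := ZMod.natCast_eq_zero_iff 4 p
    push_cast at h
    rw [Ne, h]
    intro hd
    have := Nat.le_of_dvd (by norm_num) hd
    omega
  have hu : (2 : ZMod p) * 2⁻¹ = 1 := mul_inv_cancel₀ h2ne
  have hv : (4 : ZMod p) * 4⁻¹ = 1 := mul_inv_cancel₀ h4ne
  have hpC : (p : ℂ) ≠ 0 := Nat.cast_ne_zero.2 (by omega)
  have hηp : η ^ p = 1 := by
    rw [hη, ← Complex.exp_nat_mul,
      show (p : ℂ) * (2 * Real.pi * Complex.I / p) = 2 * Real.pi * Complex.I by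
        field_simp,
      Complex.exp_two_pi_mul_I]
  have hper : ∀ n : ℕ, η ^ (n % p) = η ^ n := by
    intro n
    conv_rhs => rw [← Nat.mod_add_div n p]
    rw [pow_add, pow_mul, hηp, one_pow, mul_one]
  have he : ∀ z w : ZMod p, η ^ (z + w).val = η ^ z.val * η ^ w.val := by
    intro z w
    rw [ZMod.val_add, hper, pow_add]
  have hapow : a ^ (p - 1) = 1 := by rw [← ha]; exact pow_orderOf_eq_one a
  have ha0 : a ≠ 0 := by
    intro h
    rw [h, zero_pow (by omega)] at hapow
    exact zero_ne_one hapow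
  have hsq : (a ^ k) ^ 2 = -1 := by
    have h1 : (a ^ k) ^ 2 * ((a ^ k) ^ 2) = 1 := by
      rw [← pow_mul, ← pow_add, show k * 2 + k * 2 = p - 1 by omega, hapow]
    rcases mul_self_eq_one_iff.mp h1 with h | h
    · exfalso
      rw [← pow_mul] at h
      have hdvd : p - 1 ∣ k * 2 := ha ▸ orderOf_dvd_of_pow_eq_one h
      have := Nat.le_of_dvd (by omega) hdvd
      omega
    · exact h
  have hakk : a ^ k * a ^ (3 * k) = 1 := by
    rw [← pow_add, show k + 3 * k = p - 1 by omega, hapow]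
  have ha3k : a ^ (3 * k) = -(a ^ k) := by
    rw [show 3 * k = k * 2 + k by ring, pow_add, pow_mul, hsq]
    ring
  have hcinv : (2⁻¹ * a ^ k : ZMod p)⁻¹ = 2 * a ^ (3 * k) := by
    apply inv_eq_of_mul_eq_one_right
    calc 2⁻¹ * a ^ k * (2 * a ^ (3 * k)) = 2⁻¹ * 2 * (a ^ k * a ^ (3 * k)) := by ring
      _ = 1 := by rw [inv_mul_cancel₀ h2ne, hakk, mul_one]
  funext i
  rw [hS, Pi.smul_apply, smul_eq_mul]
  congr 1
  rw [hcinv, hN, hF]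
  rcases eq_or_ne x 0 with rfl | hx
  · rw [hφ0]
    have hsum : ∑ z : ZMod p,
        η ^ (z * (2 * a ^ (3 * k) * i)).val * N (2 * a ^ (3 * k)) (ψ 0) z = 1 := by
      rw [Finset.sum_eq_single 0]
      · rw [hN, hψ00]
        norm_num
      · intro b _ hb
        rw [hN, hψ0 b hb, mul_zero, mul_zero]
      · intro h
        exact absurd (Finset.mem_univ 0) h
    have key : (-(2⁻¹ * (4⁻¹ * a ^ k) * (2 * a ^ (3 * k) * i) ^ 2) : ZMod p)
        = 2⁻¹ * a ^ k * i ^ 2 := by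
      rw [ha3k]
      linear_combination (-4 * 2⁻¹ * 4⁻¹ * (a ^ k) * i ^ 2) * hsq
        + (2⁻¹ * (a ^ k) * i ^ 2) * hv
    rw [hsum, mul_one, key, mul_comm]
  · rw [hφx x hx]
    set m : ZMod p := 2 * a ^ (3 * k) * i with hm
    have hstep : ∀ z : ZMod p,
        η ^ (-(2⁻¹ * (4⁻¹ * a ^ k) * m ^ 2)).val *
          (η ^ (z * m).val * N (2 * a ^ (3 * k)) (ψ x) z)
        = if z ≠ 0 then
            (1 / Real.sqrt ((p : ℝ) - 1) : ℂ) *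
              (θ ^ ((x : ℕ) * log z) *
                η ^ (a ^ k * (z - i) ^ 2 - 2⁻¹ * a ^ k * i ^ 2).val)
          else 0 := by
      intro z
      rw [hN]
      rcases eq_or_ne z 0 with rfl | hz
      · rw [hψx0 x hx]
        simp
      · rw [hψx x hx z hz, if_pos hz]
        have hE : -(2⁻¹ * (4⁻¹ * a ^ k) * m ^ 2)
              + (z * m + -(2⁻¹ * (2 * a ^ (3 * k)) * z ^ 2))
            = a ^ k * (z - i) ^ 2 - 2⁻¹ * a ^ k * i ^ 2 := by
          rw [hm, ha3k]
          linear_combination (-4 * 2⁻¹ * 4⁻¹ * (a ^ k) * i ^ 2) * hsq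
            + (2⁻¹ * (a ^ k) * i ^ 2) * hv + ((a ^ k) * z ^ 2 + (a ^ k) * i ^ 2) * hu
        calc η ^ (-(2⁻¹ * (4⁻¹ * a ^ k) * m ^ 2)).val *
              (η ^ (z * m).val *
                (η ^ (-(2⁻¹ * (2 * a ^ (3 * k)) * z ^ 2)).val *
                  ((1 / Real.sqrt ((p : ℝ) - 1) : ℂ) * θ ^ ((x : ℕ) * log z))))
            = η ^ (-(2⁻¹ * (4⁻¹ * a ^ k) * m ^ 2)
                  + (z * m + -(2⁻¹ * (2 * a ^ (3 * k)) * z ^ 2))).val *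
                ((1 / Real.sqrt ((p : ℝ) - 1) : ℂ) * θ ^ ((x : ℕ) * log z)) := by
              rw [he, he]; ring
          _ = _ := by rw [hE]; ring
    have hbij : ∑ z : ZMod p,
        (if z ≠ 0 then
            (1 / Real.sqrt ((p : ℝ) - 1) : ℂ) *
              (θ ^ ((x : ℕ) * log z) *
                η ^ (a ^ k * (z - i) ^ 2 - 2⁻¹ * a ^ k * i ^ 2).val)
          else 0)
        = ∑ j ∈ Finset.Icc 1 (p - 1),
            (1 / Real.sqrt ((p : ℝ) - 1) : ℂ) *
              (θ ^ ((x : ℕ) * log (j : ZMod p)) *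
                η ^ (a ^ k * ((j : ZMod p) - i) ^ 2 - 2⁻¹ * a ^ k * i ^ 2).val) := by
      rw [← Finset.sum_filter]
      apply Finset.sum_nbij' (i := fun z : ZMod p => z.val) (j := fun j : ℕ => (j : ZMod p))
      · intro z hz
        simp only [Finset.mem_filter, Finset.mem_univ, true_and] at hz
        have h1 : z.val ≠ 0 := fun h => hz ((ZMod.val_eq_zero z).mp h)
        have h2 : z.val < p := ZMod.val_lt z
        simp only [Finset.mem_Icc]
        omega
      · intro j hj
        simp only [Finset.mem_Icc] at hj
        simp only [Finset.mem_filter, Finset.mem_univ, true_and]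
        intro h
        have h2 : ((j : ZMod p)).val = j := ZMod.val_cast_of_lt (by omega)
        rw [h, ZMod.val_zero] at h2
        omega
      · intro z _
        rw [ZMod.natCast_val, ZMod.cast_id]
      · intro j hj
        simp only [Finset.mem_Icc] at hj
        exact ZMod.val_cast_of_lt (by omega)
      · intro z _
        rw [ZMod.natCast_val, ZMod.cast_id]
    calc η ^ (-(2⁻¹ * (4⁻¹ * a ^ k) * m ^ 2)).val *
          ((1 / Real.sqrt p : ℂ) * ∑ z : ZMod p, η ^ (z * m).val * N (2 * a ^ (3 * k)) (ψ x) z)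
        = (1 / Real.sqrt p : ℂ) * ∑ z : ZMod p,
            η ^ (-(2⁻¹ * (4⁻¹ * a ^ k) * m ^ 2)).val *
              (η ^ (z * m).val * N (2 * a ^ (3 * k)) (ψ x) z) := by
          rw [Finset.mul_sum, Finset.mul_sum, Finset.mul_sum]
          apply Finset.sum_congr rfl
          intro z _; ring
      _ = (1 / Real.sqrt p : ℂ) * ∑ j ∈ Finset.Icc 1 (p - 1),
            (1 / Real.sqrt ((p : ℝ) - 1) : ℂ) *
              (θ ^ ((x : ℕ) * log (j : ZMod p)) *
                η ^ (a ^ k * ((j : ZMod p) - i) ^ 2 - 2⁻¹ * a ^ k * i ^ 2).val) := by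
          rw [← hbij]
          congr 1
          exact Finset.sum_congr rfl fun z _ => hstep z
      _ = _ := by
          rw [Finset.mul_sum, Finset.mul_sum]
          apply Finset.sum_congr rfl
          intro j _
          have hconst : (1 / Real.sqrt p : ℂ) * (1 / Real.sqrt ((p : ℝ) - 1) : ℂ)
              = (1 / Real.sqrt ((p : ℝ) * ((p : ℝ) - 1)) : ℂ) := by
            rw [Real.sqrt_mul (by positivity)]
            push_cast
            ring
          rw [← mul_assoc, hconst]
end
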